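/- If m ≥ n ≥ c ≥ 1, then Pr[E₁] ≥ 1 − 6c·exp(−cn/(10(m+n+2c))), where Pr is over a uniformly random valid assignment π. -/

import Mathlib

open Finset

/-- Labels for agents: old buyer, new buyer, old seller, new seller. -/
inductive Label : Type
  | BO | BN | SO | SN
deriving DecidableEq

instance : Fintype Label :=
  ⟨{.BO, .BN, .SO, .SN}, fun x => by cases x <;> decide⟩

/-- Total number of agents: `m` old buyers, `n` old sellers, `c` new buyers and `c` new
sellers. -/
def NN (m n c : ℕ) : ℕ := m + n + 2 * c

/-- The set of indices carrying a given label under the assignment `π`. -/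
def labelSet (m n c : ℕ) (L : Label) (π : Fin (NN m n c) → Label) :
    Finset (Fin (NN m n c)) :=
  Finset.univ.filter (fun i => π i = L)

/-- Valid assignments: exactly `m` old buyers, `c` new buyers, `n` old sellers and
`c` new sellers. -/
def validAssignments (m n c : ℕ) : Finset (Fin (NN m n c) → Label) :=
  Finset.univ.filter (fun π =>
    (labelSet m n c .BO π).card = m ∧ (labelSet m n c .BN π).card = c ∧
    (labelSet m n c .SO π).card = n ∧ (labelSet m n c .SN π).card = c)

/-- `p = ⌈n/10⌉`. -/
def pVal (n : ℕ) : ℕ := (n + 9) / 10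

/-- `I₁`: the indices of the top `p` quantiles (1-based indices `{1,…,p}`). -/
def I1 (m n c : ℕ) : Finset (Fin (NN m n c)) :=
  Finset.univ.filter (fun i => (i : ℕ) < pVal n)

/-- `I₂`: 1-based indices `{p+1,…,2p}`. -/
def I2 (m n c : ℕ) : Finset (Fin (NN m n c)) :=
  Finset.univ.filter (fun i => pVal n ≤ (i : ℕ) ∧ (i : ℕ) < 2 * pVal n)

/-- `J₁`: 1-based indices `{N-p+1,…,N}`. -/
def J1 (m n c : ℕ) : Finset (Fin (NN m n c)) :=
  Finset.univ.filter (fun i => NN m n c - pVal n ≤ (i : ℕ))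

/-- `J₂`: 1-based indices `{N-2p+1,…,N-p}`. -/
def J2 (m n c : ℕ) : Finset (Fin (NN m n c)) :=
  Finset.univ.filter (fun i =>
    NN m n c - 2 * pVal n ≤ (i : ℕ) ∧ (i : ℕ) < NN m n c - pVal n)

/-- The good event `E₁`: at least 2 new buyers in `I₁`, at least 1 old buyer in `I₂`,
at least 2 new sellers in `J₁`, at least 1 old seller in `J₂`. -/
def E1 (m n c : ℕ) : Finset (Fin (NN m n c) → Label) :=
  (validAssignments m n c).filter (fun π =>
    2 ≤ (I1 m n c ∩ labelSet m n c .BN π).card ∧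
    1 ≤ (I2 m n c ∩ labelSet m n c .BO π).card ∧
    2 ≤ (J1 m n c ∩ labelSet m n c .SN π).card ∧
    1 ≤ (J2 m n c ∩ labelSet m n c .SO π).card)

/-- The bad event `E₂`: `E₁` fails and all new sellers are among the top `2n + 2c`
indices. -/
def E2 (m n c : ℕ) : Finset (Fin (NN m n c) → Label) :=
  (validAssignments m n c).filter (fun π =>
    π ∉ E1 m n c ∧ ∀ i ∈ labelSet m n c .SN π, (i : ℕ) < 2 * n + 2 * c)

/-- The probability of an event under a uniformly random valid assignment. -/
noncomputable def prOf (m n c : ℕ) (E : Finset (Fin (NN m n c) → Label)) : ℝ :=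
  (E.card : ℝ) / (validAssignments m n c).card


/-! ### Auxiliary lemmas -/

section countAux
variable {α : Type*} [Fintype α] [DecidableEq α]

lemma count_inter_card_eq (W : Finset α) (q j : ℕ) :
    (((univ : Finset α).powersetCard q).filter (fun S => (W ∩ S).card = j)).card ≤
      W.card.choose j * Wᶜ.card.choose (q - j) := by
  classical
  have h := Finset.card_le_card_of_injOn
    (s := ((univ : Finset α).powersetCard q).filter (fun S => (W ∩ S).card = j))
    (t := (W.powersetCard j) ×ˢ (Wᶜ.powersetCard (q - j))) (fun S => (W ∩ S, S \ W)) ?_ ?_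
  · simpa [Finset.card_powersetCard] using h
  · intro S hS
    simp only [Finset.mem_coe, mem_filter, mem_powersetCard] at hS
    obtain ⟨⟨-, hcard⟩, hj⟩ := hS
    have h2 : (S ∩ W).card = j := by rw [inter_comm]; exact hj
    have h3 := Finset.card_sdiff_add_card_inter S W
    simp only [Finset.mem_coe, Finset.mem_product, mem_powersetCard]
    refine ⟨⟨inter_subset_left, hj⟩, ?_, by omega⟩
    intro x hx
    simp only [Finset.mem_sdiff] at hx
    simp [Finset.mem_compl, hx.2]
  · intro S hS T hT hST
    simp only [Prod.mk.injEq] at hST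
    have hSu : W ∩ S ∪ S \ W = S := by
      ext x; simp only [Finset.mem_union, Finset.mem_inter, Finset.mem_sdiff]; tauto
    have hTu : W ∩ T ∪ T \ W = T := by
      ext x; simp only [Finset.mem_union, Finset.mem_inter, Finset.mem_sdiff]; tauto
    rw [← hSu, ← hTu, hST.1, hST.2]

lemma card_filter_emptyInter (W : Finset α) (q : ℕ) :
    (((univ : Finset α).powersetCard q).filter (fun S => (W ∩ S).card < 1)).card ≤
      Wᶜ.card.choose q := by
  classical
  have h := count_inter_card_eq W q 0
  simp only [Nat.choose_zero_right, one_mul, Nat.sub_zero] at h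
  refine le_trans (Finset.card_le_card ?_) h
  intro S hS; simp only [mem_filter] at hS ⊢; exact ⟨hS.1, by omega⟩

lemma card_filter_le_oneInter (W : Finset α) (q : ℕ) :
    (((univ : Finset α).powersetCard q).filter (fun S => (W ∩ S).card < 2)).card ≤
      Wᶜ.card.choose q + W.card * Wᶜ.card.choose (q - 1) := by
  classical
  have h0 := count_inter_card_eq W q 0
  have h1 := count_inter_card_eq W q 1
  simp only [Nat.choose_zero_right, one_mul, Nat.sub_zero, Nat.choose_one_right] at h0 h1
  have hsub : ((univ : Finset α).powersetCard q).filter (fun S => (W ∩ S).card < 2) ⊆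
      (((univ : Finset α).powersetCard q).filter (fun S => (W ∩ S).card = 0)) ∪
      (((univ : Finset α).powersetCard q).filter (fun S => (W ∩ S).card = 1)) := by
    intro S hS; simp only [mem_filter, Finset.mem_union] at hS ⊢
    rcases (by omega : #(W ∩ S) = 0 ∨ #(W ∩ S) = 1) with h | h
    · exact Or.inl ⟨hS.1, h⟩
    · exact Or.inr ⟨hS.1, h⟩
  calc _ ≤ _ := Finset.card_le_card hsub
    _ ≤ _ + _ := Finset.card_union_le _ _
    _ ≤ _ := Nat.add_le_add h0 h1

end countAux

lemma choose_mul_pow_le (N p q : ℕ) :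
    (N - p).choose q * N ^ q ≤ N.choose q * (N - p) ^ q := by
  have hprod : (N - p).descFactorial q * N ^ q ≤ N.descFactorial q * (N - p) ^ q := by
    have e1 : N ^ q = ∏ _i ∈ Finset.range q, N := by simp
    have e2 : (N - p) ^ q = ∏ _i ∈ Finset.range q, (N - p) := by simp
    rw [Nat.descFactorial_eq_prod_range, Nat.descFactorial_eq_prod_range, e1, e2,
      ← Finset.prod_mul_distrib, ← Finset.prod_mul_distrib]
    refine Finset.prod_le_prod' ?_
    intro i _
    have h1 : (N - p - i) * N = (N - p) * N - i * N := by rw [Nat.sub_mul]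
    have h2 : (N - i) * (N - p) = N * (N - p) - i * (N - p) := by rw [Nat.sub_mul]
    rw [h1, h2, Nat.mul_comm (N - p) N]
    exact Nat.sub_le_sub_left (Nat.mul_le_mul_left i (Nat.sub_le N p)) _
  rw [Nat.descFactorial_eq_factorial_mul_choose, Nat.descFactorial_eq_factorial_mul_choose] at hprod
  have hq : 0 < q.factorial := Nat.factorial_pos q
  refine Nat.le_of_mul_le_mul_left ?_ hq
  calc q.factorial * ((N - p).choose q * N ^ q) = q.factorial * (N - p).choose q * N ^ q := by ring
    _ ≤ q.factorial * N.choose q * (N - p) ^ q := hprod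
    _ = q.factorial * (N.choose q * (N - p) ^ q) := by ring

lemma choose_ratio_le_exp (N p q : ℕ) (hN : 0 < N) (hpN : p ≤ N) :
    ((N - p).choose q : ℝ) ≤ (N.choose q : ℝ) * Real.exp (-((p : ℝ) * q) / N) := by
  have hNr : (0 : ℝ) < N := by exact_mod_cast hN
  have hcast : ((N - p).choose q : ℝ) * (N : ℝ) ^ q ≤ (N.choose q : ℝ) * ((N : ℝ) - p) ^ q := by
    have := choose_mul_pow_le N p q
    have hsub : ((N - p : ℕ) : ℝ) = (N : ℝ) - p := by
      rw [Nat.cast_sub hpN]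
    calc ((N - p).choose q : ℝ) * (N : ℝ) ^ q = (((N - p).choose q * N ^ q : ℕ) : ℝ) := by
          push_cast; ring
      _ ≤ ((N.choose q * (N - p) ^ q : ℕ) : ℝ) := by exact_mod_cast this
      _ = (N.choose q : ℝ) * ((N : ℝ) - p) ^ q := by push_cast [hsub]; ring
  have hbase : (0 : ℝ) ≤ 1 - (p : ℝ) / N := by
    rw [sub_nonneg, div_le_one hNr]; exact_mod_cast hpN
  have hstep : ((N - p).choose q : ℝ) ≤ (N.choose q : ℝ) * (1 - (p : ℝ) / N) ^ q := by
    have hNq : (0 : ℝ) < (N : ℝ) ^ q := pow_pos hNr q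
    rw [← mul_le_mul_iff_of_pos_right hNq]
    calc ((N - p).choose q : ℝ) * (N : ℝ) ^ q ≤ (N.choose q : ℝ) * ((N : ℝ) - p) ^ q := hcast
      _ = (N.choose q : ℝ) * (1 - (p : ℝ) / N) ^ q * (N : ℝ) ^ q := by
          rw [mul_assoc, ← mul_pow]; congr 2; field_simp
  refine hstep.trans ?_
  refine mul_le_mul_of_nonneg_left ?_ (Nat.cast_nonneg _)
  have h1 : 1 - (p : ℝ) / N ≤ Real.exp (-((p : ℝ) / N)) := by
    have := Real.add_one_le_exp (-((p : ℝ) / N))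
    linarith
  calc (1 - (p : ℝ) / N) ^ q ≤ Real.exp (-((p : ℝ) / N)) ^ q :=
        pow_le_pow_left₀ hbase h1 q
    _ = Real.exp (-((p : ℝ) * q) / N) := by
        rw [← Real.exp_nat_mul]; congr 1; ring

lemma card_filter_Ico (N a b : ℕ) (hb : b ≤ N) :
    ((univ : Finset (Fin N)).filter fun i : Fin N => a ≤ i.val ∧ i.val < b).card = b - a := by
  have h : ∀ x ∈ Finset.Ico a b, x < N := fun x hx =>
    lt_of_lt_of_le (Finset.mem_Ico.1 hx).2 hb
  have heq : ((univ : Finset (Fin N)).filter fun i : Fin N => a ≤ i.val ∧ i.val < b) =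
      (Finset.Ico a b).attachFin h := by
    ext i
    simp [Finset.mem_attachFin, Finset.mem_Ico]
  rw [heq, Finset.card_attachFin, Nat.card_Ico]

lemma labelSet_comp_perm (m n c : ℕ) (L : Label) (π : Fin (NN m n c) → Label)
    (σ : Equiv.Perm (Fin (NN m n c))) :
    labelSet m n c L (fun i => π (σ i)) = (labelSet m n c L π).image σ.symm := by
  ext i
  simp only [labelSet, mem_filter, mem_univ, true_and, Finset.mem_image]
  constructor
  · intro h
    exact ⟨σ i, h, by simp⟩
  · rintro ⟨j, hj, rfl⟩
    simpa using hj

lemma valid_comp_perm (m n c : ℕ) (π : Fin (NN m n c) → Label)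
    (σ : Equiv.Perm (Fin (NN m n c))) (hπ : π ∈ validAssignments m n c) :
    (fun i => π (σ i)) ∈ validAssignments m n c := by
  simp only [validAssignments, mem_filter, mem_univ, true_and] at hπ ⊢
  simp only [labelSet_comp_perm, Finset.card_image_of_injective _ σ.symm.injective]
  exact hπ

lemma fiber_card_le (m n c : ℕ) (L : Label) (S₁ S₂ : Finset (Fin (NN m n c)))
    (h : S₁.card = S₂.card) :
    ((validAssignments m n c).filter fun π => labelSet m n c L π = S₁).card ≤
    ((validAssignments m n c).filter fun π => labelSet m n c L π = S₂).card := by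
  classical
  have hcard : Fintype.card {x // x ∈ S₂} = Fintype.card {x // x ∈ S₁} := by
    simp [Fintype.card_coe, h]
  let e : {x : Fin (NN m n c) // x ∈ S₂} ≃ {x // x ∈ S₁} := Fintype.equivOfCardEq hcard
  let σ : Equiv.Perm (Fin (NN m n c)) := e.extendSubtype
  have hmem : ∀ i, i ∈ S₂ → σ i ∈ S₁ := fun i hi => e.extendSubtype_mem i hi
  have hnmem : ∀ i, i ∉ S₂ → σ i ∉ S₁ := fun i hi => e.extendSubtype_not_mem i hi
  refine Finset.card_le_card_of_injOn (fun π => fun i => π (σ i)) ?_ ?_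
  · intro π hπ
    simp only [Finset.mem_coe, mem_filter] at hπ ⊢
    refine ⟨valid_comp_perm m n c π σ hπ.1, ?_⟩
    ext i
    have hiff : (i ∈ labelSet m n c L fun i => π (σ i)) ↔ σ i ∈ S₁ := by
      simp only [labelSet, mem_filter, mem_univ, true_and]
      rw [← hπ.2]
      simp [labelSet]
    rw [hiff]
    constructor
    · intro hi
      by_contra hni
      exact hnmem i hni hi
    · exact hmem i
  · intro π₁ _ π₂ _ heq
    funext i
    have := congrFun heq (σ.symm i)
    simpa using this

lemma fiber_card_eq (m n c : ℕ) (L : Label) (S₁ S₂ : Finset (Fin (NN m n c)))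
    (h : S₁.card = S₂.card) :
    ((validAssignments m n c).filter fun π => labelSet m n c L π = S₁).card =
    ((validAssignments m n c).filter fun π => labelSet m n c L π = S₂).card :=
  le_antisymm (fiber_card_le m n c L S₁ S₂ h) (fiber_card_le m n c L S₂ S₁ h.symm)

lemma marginal (m n c : ℕ) (L : Label) (q : ℕ) (hqN : q ≤ NN m n c)
    (hq : ∀ π ∈ validAssignments m n c, (labelSet m n c L π).card = q)
    (P : Finset (Fin (NN m n c)) → Prop) [DecidablePred P] :
    ((validAssignments m n c).filter (fun π => P (labelSet m n c L π))).card *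
        (NN m n c).choose q =
      (((univ : Finset (Fin (NN m n c))).powersetCard q).filter P).card *
        (validAssignments m n c).card := by
  classical
  obtain ⟨S₀, -, hS₀⟩ := Finset.exists_subset_card_eq
    (s := (univ : Finset (Fin (NN m n c)))) (n := q) (by simpa using hqN)
  set K := ((validAssignments m n c).filter fun π => labelSet m n c L π = S₀).card with hK
  have hfib : ∀ S ∈ (univ : Finset (Fin (NN m n c))).powersetCard q,
      ((validAssignments m n c).filter fun π => labelSet m n c L π = S).card = K := by
    intro S hS
    rw [mem_powersetCard] at hS
    exact fiber_card_eq m n c L S S₀ (hS.2.trans hS₀.symm)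
  have hmap : ∀ π ∈ validAssignments m n c,
      labelSet m n c L π ∈ (univ : Finset (Fin (NN m n c))).powersetCard q := by
    intro π hπ
    rw [mem_powersetCard]
    exact ⟨Finset.subset_univ _, hq π hπ⟩
  have hV : (validAssignments m n c).card = (NN m n c).choose q * K := by
    rw [Finset.card_eq_sum_card_fiberwise hmap, Finset.sum_congr rfl hfib,
      Finset.sum_const, Finset.card_powersetCard, Finset.card_univ, Fintype.card_fin,
      smul_eq_mul]
  have hmap2 : ∀ π ∈ (validAssignments m n c).filter (fun π => P (labelSet m n c L π)),
      labelSet m n c L π ∈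
        ((univ : Finset (Fin (NN m n c))).powersetCard q).filter P := by
    intro π hπ
    rw [mem_filter] at hπ ⊢
    exact ⟨hmap π hπ.1, hπ.2⟩
  have hE : ((validAssignments m n c).filter (fun π => P (labelSet m n c L π))).card =
      (((univ : Finset (Fin (NN m n c))).powersetCard q).filter P).card * K := by
    rw [Finset.card_eq_sum_card_fiberwise hmap2]
    rw [Finset.sum_congr rfl (fun S hS => ?_), Finset.sum_const, smul_eq_mul]
    rw [mem_filter] at hS
    rw [Finset.filter_filter]
    rw [← hfib S hS.1]
    congr 1
    apply Finset.filter_congr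
    intro π hπ
    constructor
    · intro h2; exact h2.2
    · intro h2; exact ⟨by rw [h2]; exact hS.2, h2⟩
  rw [hE, hV]; ring

lemma event_bound (m n c : ℕ) (L : Label) (q : ℕ) (hqN : q ≤ NN m n c)
    (hq : ∀ π ∈ validAssignments m n c, (labelSet m n c L π).card = q)
    (P : Finset (Fin (NN m n c)) → Prop) [DecidablePred P] (bound : ℝ)
    (hb : (((((univ : Finset (Fin (NN m n c))).powersetCard q).filter P).card : ℕ) : ℝ) ≤
      bound * ((NN m n c).choose q : ℝ)) :
    (((validAssignments m n c).filter (fun π => P (labelSet m n c L π))).card : ℝ) ≤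
      bound * ((validAssignments m n c).card : ℝ) := by
  have h := marginal m n c L q hqN hq P
  have hC : (0 : ℝ) < ((NN m n c).choose q : ℝ) := by
    exact_mod_cast Nat.choose_pos hqN
  rw [← mul_le_mul_iff_of_pos_right hC]
  have hcast : (((validAssignments m n c).filter
      (fun π => P (labelSet m n c L π))).card : ℝ) * ((NN m n c).choose q : ℝ) =
      ((((univ : Finset (Fin (NN m n c))).powersetCard q).filter P).card : ℝ) *
      ((validAssignments m n c).card : ℝ) := by exact_mod_cast h
  rw [hcast]
  calc _ ≤ (bound * ((NN m n c).choose q : ℝ)) * ((validAssignments m n c).card : ℝ) :=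
        mul_le_mul_of_nonneg_right hb (Nat.cast_nonneg _)
    _ = bound * ((validAssignments m n c).card : ℝ) * ((NN m n c).choose q : ℝ) := by ring

/-- A canonical valid assignment, showing `validAssignments` is nonempty. -/
def canonical (m n c : ℕ) : Fin (NN m n c) → Label := fun i =>
  if i.val < m then .BO else if i.val < m + c then .BN
  else if i.val < m + c + n then .SO else .SN

lemma canonical_mem (m n c : ℕ) : canonical m n c ∈ validAssignments m n c := by
  have hNval : NN m n c = m + n + 2 * c := rfl
  have hBO : labelSet m n c .BO (canonical m n c) =
      (univ : Finset (Fin (NN m n c))).filter fun i => 0 ≤ i.val ∧ i.val < m := by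
    ext i
    simp only [labelSet, mem_filter, mem_univ, true_and]
    simp only [canonical]
    split_ifs <;> simp_all <;> omega
  have hBN : labelSet m n c .BN (canonical m n c) =
      (univ : Finset (Fin (NN m n c))).filter fun i => m ≤ i.val ∧ i.val < m + c := by
    ext i
    simp only [labelSet, mem_filter, mem_univ, true_and]
    simp only [canonical]
    split_ifs <;> simp_all <;> omega
  have hSO : labelSet m n c .SO (canonical m n c) =
      (univ : Finset (Fin (NN m n c))).filter fun i =>
        m + c ≤ i.val ∧ i.val < m + c + n := by
    ext i
    simp only [labelSet, mem_filter, mem_univ, true_and]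
    simp only [canonical]
    split_ifs <;> simp_all <;> omega
  have hSN : labelSet m n c .SN (canonical m n c) =
      (univ : Finset (Fin (NN m n c))).filter fun i =>
        m + c + n ≤ i.val ∧ i.val < NN m n c := by
    ext i
    have hi := i.isLt
    simp only [labelSet, mem_filter, mem_univ, true_and]
    simp only [canonical]
    split_ifs <;> simp_all <;> omega
  simp only [validAssignments, mem_filter, mem_univ, true_and]
  refine ⟨?_, ?_, ?_, ?_⟩
  · rw [hBO, card_filter_Ico _ _ _ (by omega)]; omega
  · rw [hBN, card_filter_Ico _ _ _ (by omega)]; omega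
  · rw [hSO, card_filter_Ico _ _ _ (by omega)]; omega
  · rw [hSN, card_filter_Ico _ _ _ (by omega)]; omega

set_option maxHeartbeats 2000000 in
/-- If `m ≥ n ≥ c ≥ 1`, then
`Pr[E₁] ≥ 1 − 6c·exp(−cn/(10(m+n+2c)))`. -/
theorem prE1_lower_bound (m n c : ℕ) (hc : 1 ≤ c) (hcn : c ≤ n) (hnm : n ≤ m) :
    1 - 6 * (c : ℝ) *
        Real.exp (-((c : ℝ) * (n : ℝ)) / (10 * ((m : ℝ) + (n : ℝ) + 2 * (c : ℝ)))) ≤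
      prOf m n c (E1 m n c) := by
  classical
  have hNval : NN m n c = m + n + 2 * c := rfl
  have hm1 : 1 ≤ m := le_trans hc (le_trans hcn hnm)
  have hn1 : 1 ≤ n := le_trans hc hcn
  have hple : 10 * pVal n ≤ n + 9 := by unfold pVal; omega
  have hpge : n ≤ 10 * pVal n := by unfold pVal; omega
  have hp1 : 1 ≤ pVal n := by omega
  have h2p : 2 * pVal n ≤ n + 2 := by omega
  have hpN : pVal n ≤ NN m n c := by omega
  have h2pN : 2 * pVal n ≤ NN m n c := by omega
  have hNpos : 0 < NN m n c := by omega
  have hcN : c ≤ NN m n c := by omega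
  have hmN : m ≤ NN m n c := by omega
  have hnN : n ≤ NN m n c := by omega
  -- cardinalities of the four windows
  have hI1card : (I1 m n c).card = pVal n := by
    have heq : I1 m n c = (univ : Finset (Fin (NN m n c))).filter
        fun i : Fin (NN m n c) => 0 ≤ i.val ∧ i.val < pVal n := by
      unfold I1; apply Finset.filter_congr; intro i _; simp
    rw [heq, card_filter_Ico _ _ _ hpN]; omega
  have hI2card : (I2 m n c).card = pVal n := by
    have heq : I2 m n c = (univ : Finset (Fin (NN m n c))).filter
        fun i : Fin (NN m n c) => pVal n ≤ i.val ∧ i.val < 2 * pVal n := rfl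
    rw [heq, card_filter_Ico _ _ _ h2pN]; omega
  have hJ1card : (J1 m n c).card = pVal n := by
    have heq : J1 m n c = (univ : Finset (Fin (NN m n c))).filter
        fun i : Fin (NN m n c) => NN m n c - pVal n ≤ i.val ∧ i.val < NN m n c := by
      unfold J1; apply Finset.filter_congr; intro i _; simp [i.isLt]
    rw [heq, card_filter_Ico _ _ _ le_rfl]; omega
  have hJ2card : (J2 m n c).card = pVal n := by
    have heq : J2 m n c = (univ : Finset (Fin (NN m n c))).filter
        fun i : Fin (NN m n c) =>
          NN m n c - 2 * pVal n ≤ i.val ∧ i.val < NN m n c - pVal n := rfl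
    rw [heq, card_filter_Ico _ _ _ (by omega)]; omega
  have hI1c : (I1 m n c)ᶜ.card = NN m n c - pVal n := by
    rw [Finset.card_compl, Fintype.card_fin, hI1card]
  have hI2c : (I2 m n c)ᶜ.card = NN m n c - pVal n := by
    rw [Finset.card_compl, Fintype.card_fin, hI2card]
  have hJ1c : (J1 m n c)ᶜ.card = NN m n c - pVal n := by
    rw [Finset.card_compl, Fintype.card_fin, hJ1card]
  have hJ2c : (J2 m n c)ᶜ.card = NN m n c - pVal n := by
    rw [Finset.card_compl, Fintype.card_fin, hJ2card]
  -- quotas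
  have hqBO : ∀ π ∈ validAssignments m n c, (labelSet m n c .BO π).card = m :=
    fun π hπ => ((Finset.mem_filter.1 hπ).2).1
  have hqBN : ∀ π ∈ validAssignments m n c, (labelSet m n c .BN π).card = c :=
    fun π hπ => ((Finset.mem_filter.1 hπ).2).2.1
  have hqSO : ∀ π ∈ validAssignments m n c, (labelSet m n c .SO π).card = n :=
    fun π hπ => ((Finset.mem_filter.1 hπ).2).2.2.1
  have hqSN : ∀ π ∈ validAssignments m n c, (labelSet m n c .SN π).card = c :=
    fun π hπ => ((Finset.mem_filter.1 hπ).2).2.2.2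
  -- the exponential factor
  set E : ℝ := Real.exp (-((c : ℝ) * n) / (10 * ((NN m n c : ℕ) : ℝ))) with hEdef
  have hEpos : (0 : ℝ) ≤ E := (Real.exp_pos _).le
  have hkey : ∀ q : ℕ, c ≤ q →
      ((NN m n c - pVal n).choose q : ℝ) ≤ ((NN m n c).choose q : ℝ) * E := by
    intro q hcq
    refine (choose_ratio_le_exp (NN m n c) (pVal n) q hNpos hpN).trans ?_
    refine mul_le_mul_of_nonneg_left ?_ (Nat.cast_nonneg _)
    rw [hEdef, Real.exp_le_exp]
    have hNr : (0 : ℝ) < ((NN m n c : ℕ) : ℝ) := by exact_mod_cast hNpos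
    have hnat : c * n ≤ 10 * (pVal n * q) := by nlinarith
    have hnatR : (c : ℝ) * n ≤ 10 * ((pVal n : ℝ) * q) := by exact_mod_cast hnat
    rw [neg_div, neg_div, neg_le_neg_iff, div_le_div_iff₀ (by positivity) hNr]
    nlinarith [hNr.le]
  -- c - 1 + 1 = c trick for the singleton term
  have hsingle : pVal n * ((NN m n c - pVal n).choose (c - 1)) ≤
      c * (NN m n c - pVal n).choose c := by
    have hid := Nat.choose_succ_right_eq (NN m n c - pVal n) (c - 1)
    have hc1 : c - 1 + 1 = c := by omega
    rw [hc1] at hid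
    have hple2 : pVal n ≤ NN m n c - pVal n - (c - 1) := by omega
    calc pVal n * ((NN m n c - pVal n).choose (c - 1)) ≤
        (NN m n c - pVal n - (c - 1)) * ((NN m n c - pVal n).choose (c - 1)) :=
          Nat.mul_le_mul_right _ hple2
      _ = (NN m n c - pVal n).choose (c - 1) * (NN m n c - pVal n - (c - 1)) := mul_comm _ _
      _ = (NN m n c - pVal n).choose c * c := hid.symm
      _ = c * (NN m n c - pVal n).choose c := mul_comm _ _
  -- bound for the "at least two" events
  have htwo : ∀ (W : Finset (Fin (NN m n c))), W.card = pVal n →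
      Wᶜ.card = NN m n c - pVal n →
      (((((univ : Finset (Fin (NN m n c))).powersetCard c).filter
        (fun S => (W ∩ S).card < 2)).card : ℕ) : ℝ) ≤
        (2 * (c : ℝ) * E) * ((NN m n c).choose c : ℝ) := by
    intro W hW hWc
    have h1 := card_filter_le_oneInter W c
    rw [hW, hWc] at h1
    have h2 : (((univ : Finset (Fin (NN m n c))).powersetCard c).filter
        (fun S => (W ∩ S).card < 2)).card ≤ 2 * c * (NN m n c - pVal n).choose c := by
      calc _ ≤ _ := h1
        _ ≤ (NN m n c - pVal n).choose c + c * (NN m n c - pVal n).choose c :=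
            Nat.add_le_add_left hsingle _
        _ = (1 + c) * (NN m n c - pVal n).choose c := by ring
        _ ≤ 2 * c * (NN m n c - pVal n).choose c :=
            Nat.mul_le_mul_right _ (by omega)
    calc (((((univ : Finset (Fin (NN m n c))).powersetCard c).filter
        (fun S => (W ∩ S).card < 2)).card : ℕ) : ℝ) ≤
        ((2 * c * (NN m n c - pVal n).choose c : ℕ) : ℝ) := by exact_mod_cast h2
      _ = 2 * (c : ℝ) * ((NN m n c - pVal n).choose c : ℝ) := by push_cast; ring
      _ ≤ 2 * (c : ℝ) * (((NN m n c).choose c : ℝ) * E) := by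
          refine mul_le_mul_of_nonneg_left (hkey c le_rfl) (by positivity)
      _ = (2 * (c : ℝ) * E) * ((NN m n c).choose c : ℝ) := by ring
  -- bound for the "at least one" events
  have hone : ∀ (W : Finset (Fin (NN m n c))) (q : ℕ), c ≤ q →
      Wᶜ.card = NN m n c - pVal n →
      (((((univ : Finset (Fin (NN m n c))).powersetCard q).filter
        (fun S => (W ∩ S).card < 1)).card : ℕ) : ℝ) ≤ E * ((NN m n c).choose q : ℝ) := by
    intro W q hq hWc
    have h1 := card_filter_emptyInter W q
    rw [hWc] at h1
    calc (((((univ : Finset (Fin (NN m n c))).powersetCard q).filter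
        (fun S => (W ∩ S).card < 1)).card : ℕ) : ℝ) ≤
        (((NN m n c - pVal n).choose q : ℕ) : ℝ) := by exact_mod_cast h1
      _ ≤ ((NN m n c).choose q : ℝ) * E := hkey q hq
      _ = E * ((NN m n c).choose q : ℝ) := by ring
  -- the four bad-event bounds
  have hB1 : (((validAssignments m n c).filter
      (fun π => (I1 m n c ∩ labelSet m n c .BN π).card < 2)).card : ℝ) ≤
      (2 * (c : ℝ) * E) * ((validAssignments m n c).card : ℝ) :=
    event_bound m n c .BN c hcN hqBN (fun S => (I1 m n c ∩ S).card < 2) _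
      (htwo (I1 m n c) hI1card hI1c)
  have hB3 : (((validAssignments m n c).filter
      (fun π => (J1 m n c ∩ labelSet m n c .SN π).card < 2)).card : ℝ) ≤
      (2 * (c : ℝ) * E) * ((validAssignments m n c).card : ℝ) :=
    event_bound m n c .SN c hcN hqSN (fun S => (J1 m n c ∩ S).card < 2) _
      (htwo (J1 m n c) hJ1card hJ1c)
  have hB2 : (((validAssignments m n c).filter
      (fun π => (I2 m n c ∩ labelSet m n c .BO π).card < 1)).card : ℝ) ≤
      E * ((validAssignments m n c).card : ℝ) :=
    event_bound m n c .BO m hmN hqBO (fun S => (I2 m n c ∩ S).card < 1) _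
      (hone (I2 m n c) m (le_trans hcn hnm) hI2c)
  have hB4 : (((validAssignments m n c).filter
      (fun π => (J2 m n c ∩ labelSet m n c .SO π).card < 1)).card : ℝ) ≤
      E * ((validAssignments m n c).card : ℝ) :=
    event_bound m n c .SO n hnN hqSO (fun S => (J2 m n c ∩ S).card < 1) _
      (hone (J2 m n c) n hcn hJ2c)
  -- union bound
  set B1 := (validAssignments m n c).filter
      (fun π => (I1 m n c ∩ labelSet m n c .BN π).card < 2) with hB1def
  set B2 := (validAssignments m n c).filter
      (fun π => (I2 m n c ∩ labelSet m n c .BO π).card < 1) with hB2def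
  set B3 := (validAssignments m n c).filter
      (fun π => (J1 m n c ∩ labelSet m n c .SN π).card < 2) with hB3def
  set B4 := (validAssignments m n c).filter
      (fun π => (J2 m n c ∩ labelSet m n c .SO π).card < 1) with hB4def
  have hsub : validAssignments m n c \ E1 m n c ⊆ B1 ∪ B2 ∪ B3 ∪ B4 := by
    intro π hπ
    rw [Finset.mem_sdiff] at hπ
    obtain ⟨hV, hnE⟩ := hπ
    simp only [Finset.mem_union, hB1def, hB2def, hB3def, hB4def, Finset.mem_filter]
    by_cases h1 : (I1 m n c ∩ labelSet m n c .BN π).card < 2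
    · exact Or.inl (Or.inl (Or.inl ⟨hV, h1⟩))
    by_cases h2 : (I2 m n c ∩ labelSet m n c .BO π).card < 1
    · exact Or.inl (Or.inl (Or.inr ⟨hV, h2⟩))
    by_cases h3 : (J1 m n c ∩ labelSet m n c .SN π).card < 2
    · exact Or.inl (Or.inr ⟨hV, h3⟩)
    by_cases h4 : (J2 m n c ∩ labelSet m n c .SO π).card < 1
    · exact Or.inr ⟨hV, h4⟩
    exact absurd (Finset.mem_filter.2 ⟨hV, by omega, by omega, by omega, by omega⟩) hnE
  have hcardsub : (validAssignments m n c \ E1 m n c).card ≤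
      B1.card + B2.card + B3.card + B4.card := by
    calc _ ≤ (B1 ∪ B2 ∪ B3 ∪ B4).card := Finset.card_le_card hsub
      _ ≤ (B1 ∪ B2 ∪ B3).card + B4.card := Finset.card_union_le _ _
      _ ≤ (B1 ∪ B2).card + B3.card + B4.card :=
          Nat.add_le_add_right (Finset.card_union_le _ _) _
      _ ≤ B1.card + B2.card + B3.card + B4.card :=
          Nat.add_le_add_right (Nat.add_le_add_right (Finset.card_union_le _ _) _) _
  -- nonemptiness
  have hV0 : 0 < (validAssignments m n c).card :=
    Finset.card_pos.2 ⟨canonical m n c, canonical_mem m n c⟩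
  have hVr : (0 : ℝ) < ((validAssignments m n c).card : ℝ) := by exact_mod_cast hV0
  have hc1 : (1 : ℝ) ≤ (c : ℝ) := by exact_mod_cast hc
  have hbadR : (((validAssignments m n c \ E1 m n c).card : ℕ) : ℝ) ≤
      6 * (c : ℝ) * E * ((validAssignments m n c).card : ℝ) := by
    have hcast : (((validAssignments m n c \ E1 m n c).card : ℕ) : ℝ) ≤
        (B1.card : ℝ) + (B2.card : ℝ) + (B3.card : ℝ) + (B4.card : ℝ) := by
      exact_mod_cast hcardsub
    nlinarith [hB1, hB2, hB3, hB4,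
      mul_nonneg (mul_nonneg (sub_nonneg.2 hc1) hEpos) hVr.le]
  -- final computation
  have hE1sub : E1 m n c ⊆ validAssignments m n c := Finset.filter_subset _ _
  have hE1le : (E1 m n c).card ≤ (validAssignments m n c).card := Finset.card_le_card hE1sub
  have hsd : ((validAssignments m n c \ E1 m n c).card : ℝ) =
      ((validAssignments m n c).card : ℝ) - ((E1 m n c).card : ℝ) := by
    rw [Finset.card_sdiff_of_subset hE1sub, Nat.cast_sub hE1le]
  have hexp_eq : Real.exp (-((c : ℝ) * (n : ℝ)) /
      (10 * ((m : ℝ) + (n : ℝ) + 2 * (c : ℝ)))) = E := by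
    rw [hEdef]
    congr 2
    rw [hNval]
    push_cast
    ring
  rw [hexp_eq, prOf, le_div_iff₀ hVr]
  nlinarith [hbadR, hsd]
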